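/- Let n be a positive integer and let a, b : Fin n → ℝ be non-increasing sequences of nonnegative reals such that a is majorized by b, i.e. ∑_{i<k} aᵢ ≤ ∑_{i<k} bᵢ for every k ≤ n and ∑_{i<n} aᵢ = ∑_{i<n} bᵢ. If moreover H(a) = H(b), where H(p) = ∑ᵢ φ(pᵢ) is the Shannon entropy, then a = b. -/

import Mathlib

open Finset Real

private lemma ent_aux_le {x y : ℝ} (hx : 0 < x) (hy : 0 ≤ y) :
    y - x ≤ y * (Real.log y - Real.log x) := by
  rcases eq_or_lt_of_le hy with h0 | hy'
  · simp [← h0]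
    linarith
  · have h1 : Real.log (x / y) ≤ x / y - 1 :=
      Real.log_le_sub_one_of_pos (by positivity)
    have hlog : Real.log (x / y) = Real.log x - Real.log y :=
      Real.log_div (ne_of_gt hx) (ne_of_gt hy')
    have h2 : y * Real.log (x / y) ≤ y * (x / y - 1) :=
      mul_le_mul_of_nonneg_left h1 hy
    have h3 : y * (x / y - 1) = x - y := by field_simp
    rw [hlog, h3] at h2
    nlinarith

private lemma ent_aux_lt {x y : ℝ} (hx : 0 < x) (hy : 0 ≤ y) (hne : y ≠ x) :
    y - x < y * (Real.log y - Real.log x) := by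
  rcases eq_or_lt_of_le hy with h0 | hy'
  · simp [← h0]
    linarith [hx]
  · have hne' : x / y ≠ 1 := by
      intro h
      apply hne
      field_simp at h
      linarith
    have h1 : Real.log (x / y) < x / y - 1 :=
      Real.log_lt_sub_one_of_pos (by positivity) hne'
    have hlog : Real.log (x / y) = Real.log x - Real.log y :=
      Real.log_div (ne_of_gt hx) (ne_of_gt hy')
    have h2 : y * Real.log (x / y) < y * (x / y - 1) :=
      mul_lt_mul_of_pos_left h1 hy'
    have h3 : y * (x / y - 1) = x - y := by field_simp
    rw [hlog, h3] at h2
    nlinarith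

private lemma key_nat (n : ℕ) (A B : ℕ → ℝ)
    (hAmono : ∀ i j, i ≤ j → j < n → A j ≤ A i)
    (hA0 : ∀ i, i < n → 0 ≤ A i) (hB0 : ∀ i, i < n → 0 ≤ B i)
    (hmaj : ∀ k, k ≤ n → ∑ i ∈ range k, A i ≤ ∑ i ∈ range k, B i)
    (hsum : ∑ i ∈ range n, A i = ∑ i ∈ range n, B i)
    (hent : ∑ i ∈ range n, (-(A i * Real.log (A i))) =
      ∑ i ∈ range n, (-(B i * Real.log (B i)))) :
    ∀ i, i < n → A i = B i := by
  classical
  have hP : ∃ k, k = n ∨ A k ≤ 0 := ⟨n, Or.inl rfl⟩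
  set m := Nat.find hP with hm_def
  have hmn : m ≤ n := Nat.find_le (Or.inl rfl)
  have hApos : ∀ i, i < m → 0 < A i := by
    intro i hi
    have := Nat.find_min hP hi
    push_neg at this
    exact this.2
  have hAzero : ∀ i, m ≤ i → i < n → A i = 0 := by
    intro i hmi hin
    have hmltn : m < n := lt_of_le_of_lt hmi hin
    have hspec := Nat.find_spec hP
    rw [← hm_def] at hspec
    have hAm : A m ≤ 0 := by
      rcases hspec with h | h
      · omega
      · exact h
    have h1 : A i ≤ A m := hAmono m i hmi hin
    have h2 : 0 ≤ A i := hA0 i hin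
    linarith
  have hsplitA : ∑ i ∈ range m, A i + ∑ i ∈ Ico m n, A i = ∑ i ∈ range n, A i := by
    rw [Finset.range_eq_Ico, Finset.range_eq_Ico]
    exact Finset.sum_Ico_consecutive _ (Nat.zero_le m) hmn
  have hsplitB : ∑ i ∈ range m, B i + ∑ i ∈ Ico m n, B i = ∑ i ∈ range n, B i := by
    rw [Finset.range_eq_Ico, Finset.range_eq_Ico]
    exact Finset.sum_Ico_consecutive _ (Nat.zero_le m) hmn
  have hAtail : ∑ i ∈ Ico m n, A i = 0 :=
    Finset.sum_eq_zero fun i hi => by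
      rw [Finset.mem_Ico] at hi; exact hAzero i hi.1 hi.2
  have hBtail_nonneg : 0 ≤ ∑ i ∈ Ico m n, B i :=
    Finset.sum_nonneg fun i hi => by
      rw [Finset.mem_Ico] at hi; exact hB0 i hi.2
  have hmajm := hmaj m hmn
  have hBtail : ∑ i ∈ Ico m n, B i = 0 := by linarith
  have hBzero : ∀ i, m ≤ i → i < n → B i = 0 := by
    intro i hmi hin
    have := (Finset.sum_eq_zero_iff_of_nonneg
      (fun j hj => by rw [Finset.mem_Ico] at hj; exact hB0 j hj.2)).1 hBtail i
      (Finset.mem_Ico.2 ⟨hmi, hin⟩)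
    exact this
  have hsum_m : ∑ i ∈ range m, A i = ∑ i ∈ range m, B i := by linarith
  -- entropy restricted to range m
  have hentsplitA : ∑ i ∈ range m, (-(A i * Real.log (A i))) +
      ∑ i ∈ Ico m n, (-(A i * Real.log (A i))) =
      ∑ i ∈ range n, (-(A i * Real.log (A i))) := by
    rw [Finset.range_eq_Ico, Finset.range_eq_Ico]
    exact Finset.sum_Ico_consecutive _ (Nat.zero_le m) hmn
  have hentsplitB : ∑ i ∈ range m, (-(B i * Real.log (B i))) +
      ∑ i ∈ Ico m n, (-(B i * Real.log (B i))) =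
      ∑ i ∈ range n, (-(B i * Real.log (B i))) := by
    rw [Finset.range_eq_Ico, Finset.range_eq_Ico]
    exact Finset.sum_Ico_consecutive _ (Nat.zero_le m) hmn
  have hentA_tail : ∑ i ∈ Ico m n, (-(A i * Real.log (A i))) = 0 :=
    Finset.sum_eq_zero fun i hi => by
      rw [Finset.mem_Ico] at hi
      rw [hAzero i hi.1 hi.2]; simp
  have hentB_tail : ∑ i ∈ Ico m n, (-(B i * Real.log (B i))) = 0 :=
    Finset.sum_eq_zero fun i hi => by
      rw [Finset.mem_Ico] at hi
      rw [hBzero i hi.1 hi.2]; simp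
  have hent_m : ∑ i ∈ range m, (-(A i * Real.log (A i))) =
      ∑ i ∈ range m, (-(B i * Real.log (B i))) := by linarith
  -- Abel summation setup
  set c : ℕ → ℝ := fun i => -(1 + Real.log (A i)) with hc_def
  have hcmono : ∀ i j, i ≤ j → j < m → c i ≤ c j := by
    intro i j hij hjm
    have h1 : A j ≤ A i := hAmono i j hij (lt_of_lt_of_le hjm hmn)
    have h2 : 0 < A j := hApos j hjm
    have := Real.log_le_log h2 h1
    simp only [hc_def]
    linarith
  set S : ℕ → ℝ := fun k => ∑ i ∈ range k, (A i - B i) with hS_def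
  have hS_nonpos : ∀ k, k ≤ m → S k ≤ 0 := by
    intro k hk
    have := hmaj k (le_trans hk hmn)
    simp only [hS_def, Finset.sum_sub_distrib]
    linarith
  have hS_m : S m = 0 := by
    simp only [hS_def, Finset.sum_sub_distrib]
    linarith
  have habel_ind : ∀ k, 1 ≤ k → k ≤ m →
      c (k - 1) * S k ≤ ∑ i ∈ range k, c i * (A i - B i) := by
    intro k hk1 hkm
    induction k with
    | zero => omega
    | succ k ih =>
      rcases Nat.eq_or_lt_of_le hk1 with h1 | h1
      · -- k + 1 = 1
        have hk0 : k = 0 := by omega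
        subst hk0
        simp [hS_def]
      · -- k ≥ 1
        have hk1' : 1 ≤ k := by omega
        have hkm' : k ≤ m := by omega
        have ihk := ih hk1' hkm'
        have hSk1 : S (k + 1) = S k + (A k - B k) := by
          simp only [hS_def, Finset.sum_range_succ, Finset.sum_sub_distrib]
          ring
        have hsum1 : ∑ i ∈ range (k + 1), c i * (A i - B i) =
            ∑ i ∈ range k, c i * (A i - B i) + c k * (A k - B k) :=
          Finset.sum_range_succ _ _
        have hcle : c (k - 1) ≤ c k := hcmono (k - 1) k (by omega) (by omega)
        have hSk : S k ≤ 0 := hS_nonpos k hkm'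
        have key : c k * S k ≤ c (k - 1) * S k :=
          mul_le_mul_of_nonpos_right hcle hSk
        have : (k + 1) - 1 = k := by omega
        rw [this, hSk1, hsum1]
        nlinarith [ihk, key]
  have habel : 0 ≤ ∑ i ∈ range m, c i * (A i - B i) := by
    rcases Nat.eq_zero_or_pos m with hm0 | hm1
    · simp [hm0]
    · have := habel_ind m hm1 le_rfl
      rw [hS_m] at this
      simpa using this
  -- pointwise gap
  set D : ℕ → ℝ := fun i =>
    (-(A i * Real.log (A i))) - (-(B i * Real.log (B i))) - c i * (A i - B i)
    with hD_def
  have hD_eq : ∀ i, D i = B i * (Real.log (B i) - Real.log (A i)) - (B i - A i) := by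
    intro i
    simp only [hD_def, hc_def]
    ring
  have hD_nonneg : ∀ i ∈ range m, 0 ≤ D i := by
    intro i hi
    rw [Finset.mem_range] at hi
    rw [hD_eq]
    have := ent_aux_le (hApos i hi) (hB0 i (lt_of_lt_of_le hi hmn))
    linarith
  have hsumD : ∑ i ∈ range m, D i = 0 := by
    have h1 : ∑ i ∈ range m, D i =
        (∑ i ∈ range m, (-(A i * Real.log (A i))) -
         ∑ i ∈ range m, (-(B i * Real.log (B i)))) -
        ∑ i ∈ range m, c i * (A i - B i) := by
      simp only [hD_def, Finset.sum_sub_distrib]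
    rw [hent_m] at h1
    have h2 : 0 ≤ ∑ i ∈ range m, D i := Finset.sum_nonneg hD_nonneg
    linarith
  have hD_zero : ∀ i ∈ range m, D i = 0 :=
    (Finset.sum_eq_zero_iff_of_nonneg hD_nonneg).1 hsumD
  intro i hin
  rcases lt_or_ge i m with him | him
  · by_contra hne
    have h0 := hD_zero i (Finset.mem_range.2 him)
    rw [hD_eq] at h0
    have := ent_aux_lt (hApos i him) (hB0 i hin) (fun h => hne h.symm)
    linarith
  · rw [hAzero i him hin, hBzero i him hin]

theorem eq_of_majorized_of_shannon_entropy_eq (n : ℕ) (hn : 0 < n)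
    (a b : Fin n → ℝ) (ha : Antitone a) (hb : Antitone b)
    (ha0 : ∀ i, 0 ≤ a i) (hb0 : ∀ i, 0 ≤ b i)
    (hmaj : ∀ k : ℕ, k ≤ n →
      ∑ i ∈ Finset.univ.filter (fun i : Fin n => (i : ℕ) < k), a i ≤
        ∑ i ∈ Finset.univ.filter (fun i : Fin n => (i : ℕ) < k), b i)
    (hsum : ∑ i, a i = ∑ i, b i)
    (hent : ∑ i, (-(a i * Real.log (a i))) = ∑ i, (-(b i * Real.log (b i)))) :
    a = b := by
  classical
  set A : ℕ → ℝ := fun i => if h : i < n then a ⟨i, h⟩ else 0 with hA_def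
  set B : ℕ → ℝ := fun i => if h : i < n then b ⟨i, h⟩ else 0 with hB_def
  have hAa : ∀ i : Fin n, A (i : ℕ) = a i := by
    intro i; simp [hA_def, i.isLt]
  have hBb : ∀ i : Fin n, B (i : ℕ) = b i := by
    intro i; simp [hB_def, i.isLt]
  have hfilter : ∀ (f : Fin n → ℝ) (k : ℕ), k ≤ n →
      ∑ i ∈ Finset.univ.filter (fun i : Fin n => (i : ℕ) < k), f i =
      ∑ j ∈ range k, (if h : j < n then f ⟨j, h⟩ else 0) := by
    intro f k hk
    rw [Finset.sum_filter]
    have step1 : (∑ i : Fin n, if (i : ℕ) < k then f i else 0) =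
        ∑ j ∈ range n, (if j < k then (if h : j < n then f ⟨j, h⟩ else 0) else 0) := by
      rw [← Fin.sum_univ_eq_sum_range
        (fun j => if j < k then (if h : j < n then f ⟨j, h⟩ else 0) else 0) n]
      apply Finset.sum_congr rfl
      intro i _
      by_cases h : (i : ℕ) < k <;> simp [h, i.isLt]
    rw [step1, ← Finset.sum_filter]
    congr 1
    ext j
    simp only [Finset.mem_filter, Finset.mem_range]
    omega
  have key := key_nat n A B
    (fun i j hij hjn => by
      simp only [hA_def]
      rw [dif_pos hjn, dif_pos (lt_of_le_of_lt hij hjn)]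
      exact ha (show (⟨i, _⟩ : Fin n) ≤ ⟨j, hjn⟩ from hij))
    (fun i hin => by simp only [hA_def]; rw [dif_pos hin]; exact ha0 _)
    (fun i hin => by simp only [hB_def]; rw [dif_pos hin]; exact hb0 _)
    (fun k hk => by
      have h1 := hfilter a k hk
      have h2 := hfilter b k hk
      rw [← h1, ← h2]
      exact hmaj k hk)
    (by rw [← hfilter a n le_rfl, ← hfilter b n le_rfl]
        simpa [Finset.filter_true_of_mem (fun (i : Fin n) _ => i.isLt)] using hsum)
    (by
      rw [← Fin.sum_univ_eq_sum_range (fun j => -(A j * Real.log (A j))) n,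
          ← Fin.sum_univ_eq_sum_range (fun j => -(B j * Real.log (B j))) n]
      simp only [hAa, hBb]
      exact hent)
  funext i
  have := key i i.isLt
  rw [hAa i, hBb i] at this
  exact this
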